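/- Let f(r) be the density of GED(α, σ, κ) with σ > 0, κ > 0, and define U(w, β) = β if w ≥ β and U(w, β) = w if w < β. Then for any h ∈ ℝ, ∫_{-∞}^{∞} U(h r, h α) f(r) dr = h(α − σ τ(κ) sign(h)), where τ(κ) = Γ(2κ+1)/(2^{2-κ} Γ(κ+1)) and sign(0) = 0. -/

import Mathlib

open MeasureTheory Real Set

noncomputable def gedDensity (μ σ κ : ℝ) (r : ℝ) : ℝ :=
  Real.exp (-(1 / 2) * |(r - μ) / σ| ^ (1 / κ)) /
    (2 ^ (κ + 1) * σ * Real.Gamma (κ + 1))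

noncomputable def tau (κ : ℝ) : ℝ :=
  Real.Gamma (2 * κ + 1) / (2 ^ ((2 : ℝ) - κ) * Real.Gamma (κ + 1))

noncomputable def U (w β : ℝ) : ℝ := if w ≥ β then β else w

lemma aux_integrableOn {p s b : ℝ} (hp : 0 < p) (hs : -1 < s) (hb : 0 < b) :
    IntegrableOn (fun x : ℝ => x ^ s * Real.exp (-b * x ^ p)) (Ioi 0) := by
  rw [← integrableOn_Ioi_comp_rpow_iff' (fun x : ℝ => x ^ s * Real.exp (-b * x ^ p))
    (one_div_ne_zero hp.ne')]
  have h1 : IntegrableOn (fun x : ℝ => x ^ ((s + 1) / p - 1) * Real.exp (-b * x ^ (1 : ℝ)))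
      (Ioi 0) := by
    refine integrableOn_rpow_mul_exp_neg_mul_rpow ?_ one_pos hb
    have : 0 < (s + 1) / p := div_pos (by linarith) hp
    linarith
  refine h1.congr_fun (fun x hx => ?_) measurableSet_Ioi
  have hx0 : (0 : ℝ) < x := hx
  rw [smul_eq_mul, ← Real.rpow_mul hx0.le, ← Real.rpow_mul hx0.le,
    one_div_mul_cancel hp.ne', Real.rpow_one, ← mul_assoc, ← Real.rpow_add hx0]
  congr 2
  field_simp
  simp only [Real.rpow_one, pow_one]
  ring_nf

lemma aux_integrable {p s b : ℝ} (hp : 0 < p) (hs : -1 < s) (hb : 0 < b) :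
    Integrable (fun x : ℝ => |x| ^ s * Real.exp (-b * |x| ^ p)) := by
  have hf := aux_integrableOn hp hs hb
  have hf' : IntegrableOn (fun x : ℝ => |x| ^ s * Real.exp (-b * |x| ^ p)) (Ioi 0) :=
    hf.congr_fun (fun x hx => by rw [abs_of_pos hx]) measurableSet_Ioi
  have int_Iic : IntegrableOn (fun x : ℝ => |x| ^ s * Real.exp (-b * |x| ^ p)) (Iic 0) := by
    rw [← Measure.map_neg_eq_self (volume : Measure ℝ)]
    have m : MeasurableEmbedding fun x : ℝ => -x := (Homeomorph.neg ℝ).measurableEmbedding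
    rw [m.integrableOn_map_iff]
    simp_rw [Function.comp_def, abs_neg, neg_preimage, neg_Iic, neg_zero]
    exact Iff.mpr integrableOn_Ici_iff_integrableOn_Ioi hf'
  rw [← integrableOn_univ, ← Iic_union_Ioi (a := (0 : ℝ))]
  exact int_Iic.union hf'

theorem expected_utility (α σ κ : ℝ) (hσ : 0 < σ) (hκ : 0 < κ) (h : ℝ) :
    ∫ r : ℝ, U (h * r) (h * α) * gedDensity α σ κ r =
      h * (α - σ * tau κ * Real.sign h) := by
  have hΓ : 0 < Real.Gamma (κ + 1) := Real.Gamma_pos_of_pos (by linarith)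
  have hΓ2 : 0 < Real.Gamma (2 * κ + 1) := Real.Gamma_pos_of_pos (by linarith)
  set p : ℝ := 1 / κ with hp_def
  have hp : 0 < p := by positivity
  set b : ℝ := 1 / 2 * σ ^ (-p) with hb_def
  have hb : 0 < b := by positivity
  set c : ℝ := 2 ^ (κ + 1) * σ * Real.Gamma (κ + 1) with hc_def
  have hc : 0 < c := by positivity
  have hσp : (0 : ℝ) < σ ^ p := rpow_pos_of_pos hσ p
  -- pointwise rewrite of the integrand
  have hU : ∀ r : ℝ, U (h * r) (h * α) * gedDensity α σ κ r
      = (h / 2 / c) * ((r - α) * Real.exp (-b * |r - α| ^ p))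
        + (h * α / c) * Real.exp (-b * |r - α| ^ p)
        - (|h| / 2 / c) * (|r - α| * Real.exp (-b * |r - α| ^ p)) := by
    intro r
    have habs : -(1 / 2) * |(r - α) / σ| ^ p = -b * |r - α| ^ p := by
      rw [abs_div, abs_of_pos hσ, div_rpow (abs_nonneg _) hσ.le, hb_def,
        Real.rpow_neg hσ.le]
      field_simp
    have hged : gedDensity α σ κ r = Real.exp (-b * |r - α| ^ p) / c := by
      rw [gedDensity, ← hp_def, ← hc_def, habs]
    have hU' : U (h * r) (h * α) = (h * (r - α) + 2 * (h * α) - |h| * |r - α|) / 2 := by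
      have key : |h| * |r - α| = |h * r - h * α| := by rw [← abs_mul]; ring_nf
      rw [U]
      split_ifs with hw
      · rw [key, abs_of_nonneg (by linarith)]; ring
      · rw [key, abs_of_neg (by linarith)]; ring
    rw [hU', hged]
    field_simp
  simp_rw [hU]
  rw [show (∫ r : ℝ, ((h / 2 / c) * ((r - α) * Real.exp (-b * |r - α| ^ p))
        + (h * α / c) * Real.exp (-b * |r - α| ^ p)
        - (|h| / 2 / c) * (|r - α| * Real.exp (-b * |r - α| ^ p))))
      = ∫ x : ℝ, ((h / 2 / c) * (x * Real.exp (-b * |x| ^ p))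
        + (h * α / c) * Real.exp (-b * |x| ^ p)
        - (|h| / 2 / c) * (|x| * Real.exp (-b * |x| ^ p))) from
    integral_sub_right_eq_self (fun x : ℝ =>
      (h / 2 / c) * (x * Real.exp (-b * |x| ^ p))
        + (h * α / c) * Real.exp (-b * |x| ^ p)
        - (|h| / 2 / c) * (|x| * Real.exp (-b * |x| ^ p))) α]
  -- integrability
  have i2 : Integrable (fun x : ℝ => Real.exp (-b * |x| ^ p)) := by
    have := aux_integrable (s := 0) hp (by norm_num) hb
    simpa using this
  have i3 : Integrable (fun x : ℝ => |x| * Real.exp (-b * |x| ^ p)) := by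
    have := aux_integrable (s := 1) hp (by norm_num) hb
    simpa using this
  have i1 : Integrable (fun x : ℝ => x * Real.exp (-b * |x| ^ p)) := by
    refine i3.mono' ?_ ?_
    · exact (continuous_id.mul (Real.continuous_exp.comp
        (continuous_const.mul
          (continuous_abs.rpow_const fun _ => Or.inr hp.le)))).aestronglyMeasurable
    · refine Filter.Eventually.of_forall fun x => ?_
      rw [norm_mul, Real.norm_eq_abs, Real.norm_eq_abs, Real.abs_exp]
  have i1' : Integrable (fun x : ℝ => (h / 2 / c) * (x * Real.exp (-b * |x| ^ p))) :=
    i1.const_mul _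
  have i2' : Integrable (fun x : ℝ => (h * α / c) * Real.exp (-b * |x| ^ p)) :=
    i2.const_mul _
  have i3' : Integrable (fun x : ℝ => (|h| / 2 / c) * (|x| * Real.exp (-b * |x| ^ p))) :=
    i3.const_mul _
  have iA : Integrable (fun x : ℝ => (h / 2 / c) * (x * Real.exp (-b * |x| ^ p))
      + (h * α / c) * Real.exp (-b * |x| ^ p)) := i1'.add i2'
  rw [integral_sub iA i3', integral_add i1' i2', integral_const_mul, integral_const_mul,
    integral_const_mul]
  -- value of the odd integral
  have v1 : ∫ x : ℝ, x * Real.exp (-b * |x| ^ p) = 0 := by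
    have := integral_neg_eq_self (fun x : ℝ => x * Real.exp (-b * |x| ^ p)) volume
    simp only [abs_neg, neg_mul, integral_neg] at this
    simp only [neg_mul]
    linarith
  -- rpow algebra
  have h1p : 1 / p = κ := by rw [hp_def, one_div_one_div]
  have half_rpow : ∀ t : ℝ, ((1 : ℝ) / 2) ^ t = 2 ^ (-t) := by
    intro t
    rw [one_div, Real.inv_rpow (by norm_num : (0:ℝ) ≤ 2), ← Real.rpow_neg (by norm_num : (0:ℝ) ≤ 2)]
  have hdiv : ∀ t : ℝ, t / p = t * κ := fun t => by rw [hp_def, div_div_eq_mul_div, div_one]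
  have hbpow : ∀ t : ℝ, b ^ (-(t / p)) = 2 ^ (t * κ) * σ ^ t := by
    intro t
    rw [hb_def, Real.mul_rpow (by norm_num) (Real.rpow_nonneg hσ.le _),
      ← Real.rpow_mul hσ.le, half_rpow, neg_neg,
      show -p * -(t / p) = t by
        rw [neg_mul_neg, hp_def, div_div_eq_mul_div, div_one]; field_simp,
      hdiv]
  -- value of the zeroth moment
  have v2 : ∫ x : ℝ, Real.exp (-b * |x| ^ p) = c := by
    rw [integral_comp_abs (f := fun t : ℝ => Real.exp (-b * t ^ p)),
      integral_exp_neg_mul_rpow hp hb, h1p, neg_div, hbpow 1, Real.rpow_one,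
      show (1 : ℝ) * κ = κ by ring, hc_def, Real.rpow_add two_pos, Real.rpow_one]
    ring
  -- value of the first absolute moment
  have v3 : ∫ x : ℝ, |x| * Real.exp (-b * |x| ^ p)
      = 2 ^ (2 * κ) * (σ * σ) * Real.Gamma (2 * κ + 1) := by
    rw [integral_comp_abs (f := fun t : ℝ => t * Real.exp (-b * t ^ p))]
    rw [show (∫ t in Ioi (0:ℝ), t * Real.exp (-b * t ^ p))
        = ∫ t in Ioi (0:ℝ), t ^ (1:ℝ) * Real.exp (-b * t ^ p) from
      setIntegral_congr_fun measurableSet_Ioi fun x _ => by rw [Real.rpow_one]]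
    rw [integral_rpow_mul_exp_neg_mul_rpow hp (by norm_num) hb,
      show (-(1 + 1) : ℝ) / p = -(2 / p) by rw [show (-(1+1):ℝ) = -2 by norm_num, neg_div],
      hbpow 2, h1p,
      show ((1:ℝ) + 1) / p = 2 * κ by rw [show ((1:ℝ)+1) = 2 by norm_num, hdiv],
      Real.Gamma_add_one (by positivity : 2 * κ ≠ 0),
      show (σ:ℝ) ^ (2:ℝ) = σ * σ by
        rw [show (2:ℝ) = 1 + 1 by norm_num, Real.rpow_add hσ, Real.rpow_one]]
    ring
  rw [v1, v2, v3]
  -- final algebra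
  have hsign : h * Real.sign h = |h| := by
    rcases lt_trichotomy h 0 with h0 | h0 | h0
    · rw [Real.sign_of_neg h0, abs_of_neg h0]; ring
    · simp [h0]
    · rw [Real.sign_of_pos h0, abs_of_pos h0]; ring
  rw [show h * (α - σ * tau κ * Real.sign h) = h * α - σ * tau κ * (h * Real.sign h) by ring,
    hsign, tau]
  have e1 : (2:ℝ) ^ (κ + 1) = 2 * 2 ^ κ := by
    rw [Real.rpow_add two_pos, Real.rpow_one]; ring
  have e2 : (2:ℝ) ^ ((2:ℝ) - κ) = 4 / 2 ^ κ := by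
    rw [Real.rpow_sub two_pos, show (2:ℝ) ^ (2:ℝ) = 4 by
      rw [show (2:ℝ) = ((2:ℕ):ℝ) by norm_num, Real.rpow_natCast]; norm_num]
  have e3 : (2:ℝ) ^ (2 * κ) = 2 ^ κ * 2 ^ κ := by
    rw [two_mul, Real.rpow_add two_pos]
  have ht : (0:ℝ) < 2 ^ κ := rpow_pos_of_pos two_pos κ
  rw [hc_def, e1, e2, e3]
  field_simp
  ring
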